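/- Every fixed point of SSPM reachable from the initial configuration with n grains is, up to a single possible plateau structure, a 'double staircase': there exists a peak index such that to the right of the peak heights strictly decrease by exactly 1 except for at most one plateau (two adjacent equal columns), and symmetrically to the left, with possibly a plateau at the top. -/

import Mathlib

/-- Initial configuration: `n` grains at position 0. -/
def initConf (n : ℕ) : ℤ → ℕ := fun i => if i = 0 then n else 0

/-- Move one grain from column `i` to column `j`. -/
def moveGrain (a : ℤ → ℕ) (i j : ℤ) : ℤ → ℕ :=
  fun k => if k = i then a k - 1 else if k = j then a k + 1 else a k

/-- One sequential SSPM step. -/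
def sspmStep (a b : ℤ → ℕ) : Prop :=
  ∃ i : ℤ, (a (i + 1) + 2 ≤ a i ∧ b = moveGrain a i (i + 1)) ∨
           (a (i - 1) + 2 ≤ a i ∧ b = moveGrain a i (i - 1))

/-- Left rule applicable at column `i`. -/
def appL (a : ℤ → ℕ) (i : ℤ) : Prop := a (i - 1) + 2 ≤ a i

/-- Right rule applicable at column `i`. -/
def appR (a : ℤ → ℕ) (i : ℤ) : Prop := a (i + 1) + 2 ≤ a i

/-- A choice function for a parallel step: `some false` = fire left,
`some true` = fire right, `none` = not fired.  Every column on which some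
rule applies must fire. -/
def ValidChoice (a : ℤ → ℕ) (d : ℤ → Option Bool) : Prop :=
  ∀ i : ℤ, (d i = some false → appL a i) ∧ (d i = some true → appR a i) ∧
    (d i = none → ¬ appL a i ∧ ¬ appR a i)

/-- The configuration resulting from firing all columns according to `d`. -/
def psspmResult (a : ℤ → ℕ) (d : ℤ → Option Bool) : ℤ → ℕ :=
  fun i => (a i - (if d i = none then 0 else 1))
    + (if d (i - 1) = some true then 1 else 0)
    + (if d (i + 1) = some false then 1 else 0)

/-- One parallel PSSPM step. -/
def psspmStep (a b : ℤ → ℕ) : Prop :=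
  ∃ d : ℤ → Option Bool, ValidChoice a d ∧ b = psspmResult a d

/-- Reachability: reflexive transitive closure of a step relation. -/
def Reaches (step : (ℤ → ℕ) → (ℤ → ℕ) → Prop) : (ℤ → ℕ) → (ℤ → ℕ) → Prop :=
  Relation.ReflTransGen step

/-- Fixed point: no rule applies anywhere. -/
def IsFixed (c : ℤ → ℕ) : Prop :=
  ∀ i : ℤ, c i ≤ c (i + 1) + 1 ∧ c i ≤ c (i - 1) + 1

/-- Unimodal configuration: nondecreasing up to some index, nonincreasing after. -/
def Unimodal (c : ℤ → ℕ) : Prop :=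
  ∃ j : ℤ, (∀ i k : ℤ, i ≤ k → k ≤ j → c i ≤ c k) ∧
           (∀ i k : ℤ, j ≤ i → i ≤ k → c k ≤ c i)

/-- Strict lexicographic order, reading positions from left to right. -/
def lexLt (a b : ℤ → ℕ) : Prop :=
  ∃ i : ℤ, a i < b i ∧ ∀ k : ℤ, k < i → a k = b k

/-- Lexicographic order. -/
def lexLe (a b : ℤ → ℕ) : Prop := a = b ∨ lexLt a b

/-- `closeStar a b` (a ◁* b): the nonzero entries of `a - b`, read from left
to right, form a concatenation of pairs (−1 then +1), recorded by an ordered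
list of index pairs. -/
def closeStar (a b : ℤ → ℕ) : Prop :=
  ∃ l : List (ℤ × ℤ),
    (∀ p ∈ l, p.1 < p.2) ∧
    l.Chain' (fun p q => p.2 < q.1) ∧
    ∀ i : ℤ, (a i : ℤ) - (b i : ℤ) =
      (if i ∈ l.map Prod.snd then 1 else 0) - (if i ∈ l.map Prod.fst then 1 else 0)

/-- `closeRel a b` (a ◁ b): `a - b` is exactly −1 at some index `i` and +1 at
some index `j > i`, and 0 elsewhere. -/
def closeRel (a b : ℤ → ℕ) : Prop :=
  ∃ i j : ℤ, i < j ∧ ((a i : ℤ) = (b i : ℤ) - 1) ∧ (a j = b j + 1) ∧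
    ∀ k : ℤ, k ≠ i → k ≠ j → a k = b k

namespace SSPMDev

def Bnd (a : ℤ → ℕ) : Prop := ∃ lo hi : ℤ, ∀ k : ℤ, k < lo ∨ hi < k → a k = 0

def Uni (a : ℤ → ℕ) : Prop :=
  ∃ j : ℤ, (∀ k : ℤ, k < j → a k ≤ a (k+1)) ∧ (∀ k : ℤ, j ≤ k → a (k+1) ≤ a k)

def C1 (a : ℤ → ℕ) : Prop :=
  ∀ i : ℤ, a i = a (i+1) → a (i+1) = a (i+2) → 0 < a i → a (i-1) ≤ a i ∧ a (i+3) ≤ a (i+2)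

def C2 (a : ℤ → ℕ) : Prop :=
  ∀ i : ℤ, a i = a (i+1) → a (i+1) = a (i+2) → a (i+2) = a (i+3) → a (i+3) = a (i+4) → a i = 0

def C3R (a : ℤ → ℕ) : Prop :=
  ∀ i j : ℤ, i + 2 ≤ j → a i < a (i-1) → a i = a (i+1) → 0 < a i →
    a j = a (j+1) → 0 < a j →
    ∃ k : ℤ, i + 1 ≤ k ∧ k + 1 ≤ j ∧ a (k+1) + 2 ≤ a k

def C3L (a : ℤ → ℕ) : Prop :=
  ∀ i j : ℤ, j + 2 ≤ i → a (i+1) < a (i+2) → a i = a (i+1) → 0 < a i →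
    a j = a (j+1) → 0 < a j →
    ∃ k : ℤ, j + 1 ≤ k ∧ k + 1 ≤ i ∧ a k + 2 ≤ a (k+1)

def C4 (a : ℤ → ℕ) : Prop :=
  ∀ t i j : ℤ, a t = a (t+1) → a (t+1) = a (t+2) → a (t+2) = a (t+3) → 0 < a t →
    i + 2 ≤ t → a i = a (i+1) → 0 < a i →
    t + 4 ≤ j → a j = a (j+1) → 0 < a j →
    (∀ k : ℤ, i + 1 ≤ k → k + 1 ≤ t → a k ≤ a (k+1) ∧ a (k+1) ≤ a k + 1) →
    (∀ k : ℤ, t + 3 ≤ k → k + 1 ≤ j → a (k+1) ≤ a k ∧ a k ≤ a (k+1) + 1) → False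

def Inv (a : ℤ → ℕ) : Prop := Bnd a ∧ Uni a ∧ C1 a ∧ C2 a ∧ C3R a ∧ C3L a ∧ C4 a

/-- chain lemma: ascending -/
lemma chainLe {a : ℤ → ℕ} {j : ℤ} (h : ∀ k : ℤ, k < j → a k ≤ a (k+1)) :
    ∀ i k : ℤ, i ≤ k → k ≤ j → a i ≤ a k := by
  intro i k hik hkj
  have H : ∀ k : ℤ, i ≤ k → (k ≤ j → a i ≤ a k) :=
    Int.le_induction (motive := fun k _ => k ≤ j → a i ≤ a k) (fun _ => le_refl _)
      (fun n _ ih hnj => le_trans (ih (by omega)) (h n (by omega)))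
  exact H k hik hkj

/-- chain lemma: descending -/
lemma chainGe {a : ℤ → ℕ} {j : ℤ} (h : ∀ k : ℤ, j ≤ k → a (k+1) ≤ a k) :
    ∀ i k : ℤ, j ≤ i → i ≤ k → a k ≤ a i := by
  intro i k hji hik
  have H : ∀ k : ℤ, i ≤ k → a k ≤ a i :=
    Int.le_induction (motive := fun k _ => a k ≤ a i) (le_refl _)
      (fun n _ ih => le_trans (h n (by omega)) ih)
  exact H k hik

def mir (a : ℤ → ℕ) : ℤ → ℕ := fun k => a (-k)

lemma mir_mir (a : ℤ → ℕ) : mir (mir a) = a := by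
  funext k; simp [mir]

lemma mir_apply (a : ℤ → ℕ) (k : ℤ) : mir a k = a (-k) := rfl

lemma mir_Bnd {a : ℤ → ℕ} (h : Bnd a) : Bnd (mir a) := by
  obtain ⟨lo, hi, hb⟩ := h
  exact ⟨-hi, -lo, fun k hk => hb (-k) (by omega)⟩

lemma mir_Uni {a : ℤ → ℕ} (h : Uni a) : Uni (mir a) := by
  obtain ⟨j, hLe, hGe⟩ := h
  refine ⟨-j, fun k hk => ?_, fun k hk => ?_⟩
  · have := hGe (-k-1) (by omega)
    simpa [mir, show -k-1+1 = -k by ring, show -(k+1) = -k-1 by ring] using this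
  · have := hLe (-k-1) (by omega)
    simpa [mir, show -k-1+1 = -k by ring, show -(k+1) = -k-1 by ring] using this

lemma mir_C1 {a : ℤ → ℕ} (h : C1 a) : C1 (mir a) := by
  intro i h1 h2 h0
  simp only [mir_apply] at h1 h2 h0 ⊢
  have e1 : -(i+1) = -i-1 := by ring
  have e2 : -(i+2) = -i-2 := by ring
  rw [e1] at h1
  rw [e1, e2] at h2
  have := h (-i-2) (by rw [show (-i-2)+1 = -i-1 by ring]; omega)
    (by rw [show (-i-2)+1 = -i-1 by ring, show (-i-2)+2 = -i by ring]; omega)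
    (by omega)
  rw [show (-i-2)-1 = -(i+3) by ring, show (-i-2)+3 = -(i-1) by ring,
      show (-i-2)+2 = -i by ring] at this
  rw [show -(i+2) = -i-2 by ring]
  omega

lemma mir_C2 {a : ℤ → ℕ} (h : C2 a) : C2 (mir a) := by
  intro i h1 h2 h3 h4
  simp only [mir_apply] at h1 h2 h3 h4 ⊢
  rw [show -(i+1) = -i-1 by ring] at h1 h2
  rw [show -(i+2) = -i-2 by ring] at h2 h3
  rw [show -(i+3) = -i-3 by ring] at h3 h4
  rw [show -(i+4) = -i-4 by ring] at h4
  have := h (-i-4) (by rw [show (-i-4)+1 = -i-3 by ring]; omega)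
    (by rw [show (-i-4)+1 = -i-3 by ring, show (-i-4)+2 = -i-2 by ring]; omega)
    (by rw [show (-i-4)+2 = -i-2 by ring, show (-i-4)+3 = -i-1 by ring]; omega)
    (by rw [show (-i-4)+3 = -i-1 by ring, show (-i-4)+4 = -i by ring]; omega)
  omega

lemma mir_C3R {a : ℤ → ℕ} (h : C3L a) : C3R (mir a) := by
  intro i j hij h1 h2 h0 h3 h0'
  simp only [mir_apply] at h1 h2 h0 h3 h0' ⊢
  rw [show -(i-1) = -i+1 by ring] at h1
  rw [show -(i+1) = -i-1 by ring] at h2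
  rw [show -(j+1) = -j-1 by ring] at h3
  obtain ⟨k, hk1, hk2, hk3⟩ := h (-i-1) (-j-1) (by omega)
    (by rw [show (-i-1)+1 = -i by ring, show (-i-1)+2 = -i+1 by ring]; omega)
    (by rw [show (-i-1)+1 = -i by ring]; omega)
    (by omega)
    (by rw [show (-j-1)+1 = -j by ring]; omega)
    (by omega)
  refine ⟨-k-1, by omega, by omega, ?_⟩
  have e1 : (-(-k-1+1) : ℤ) = k := by ring
  have e2 : (-(-k-1) : ℤ) = k + 1 := by ring
  rw [e1, e2]
  omega

lemma mir_C3L {a : ℤ → ℕ} (h : C3R a) : C3L (mir a) := by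
  intro i j hij h1 h2 h0 h3 h0'
  simp only [mir_apply] at h1 h2 h0 h3 h0' ⊢
  rw [show -(i+1) = -i-1 by ring, show -(i+2) = -i-2 by ring] at h1
  rw [show -(i+1) = -i-1 by ring] at h2
  rw [show -(j+1) = -j-1 by ring] at h3
  obtain ⟨k, hk1, hk2, hk3⟩ := h (-i-1) (-j-1) (by omega)
    (by rw [show (-i-1)-1 = -i-2 by ring]; omega)
    (by rw [show (-i-1)+1 = -i by ring]; omega)
    (by omega)
    (by rw [show (-j-1)+1 = -j by ring]; omega)
    (by omega)
  refine ⟨-k-1, by omega, by omega, ?_⟩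
  have e1 : (-(-k-1+1) : ℤ) = k := by ring
  have e2 : (-(-k-1) : ℤ) = k + 1 := by ring
  rw [e1, e2]
  omega

lemma mir_C4 {a : ℤ → ℕ} (h : C4 a) : C4 (mir a) := by
  intro t i j h1 h2 h3 h0 hit hpi h0i htj hpj h0j hLC hRC
  simp only [mir_apply] at h1 h2 h3 h0 hpi h0i hpj h0j hLC hRC
  rw [show -(t+1) = -t-1 by ring] at h1 h2
  rw [show -(t+2) = -t-2 by ring] at h2 h3
  rw [show -(t+3) = -t-3 by ring] at h3
  rw [show -(i+1) = -i-1 by ring] at hpi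
  rw [show -(j+1) = -j-1 by ring] at hpj
  refine h (-t-3) (-j-1) (-i-1)
    (by rw [show (-t-3)+1 = -t-2 by ring]; omega)
    (by rw [show (-t-3)+1 = -t-2 by ring, show (-t-3)+2 = -t-1 by ring]; omega)
    (by rw [show (-t-3)+2 = -t-1 by ring, show (-t-3)+3 = -t by ring]; omega)
    (by omega)
    (by omega)
    (by rw [show (-j-1)+1 = -j by ring]; omega)
    (by omega)
    (by omega)
    (by rw [show (-i-1)+1 = -i by ring]; omega)
    (by omega) ?_ ?_
  · intro k hk1 hk2
    have := hRC (-k-1) (by omega) (by omega)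
    have e1 : (-(-k-1+1) : ℤ) = k := by ring
    have e2 : (-(-k-1) : ℤ) = k + 1 := by ring
    rw [e1, e2] at this
    exact ⟨this.1, this.2⟩
  · intro k hk1 hk2
    have := hLC (-k-1) (by omega) (by omega)
    have e1 : (-(-k-1+1) : ℤ) = k := by ring
    have e2 : (-(-k-1) : ℤ) = k + 1 := by ring
    rw [e1, e2] at this
    exact ⟨this.1, this.2⟩

lemma mir_Inv {a : ℤ → ℕ} (h : Inv a) : Inv (mir a) := by
  obtain ⟨hB, hU, h1, h2, h3r, h3l, h4⟩ := h
  exact ⟨mir_Bnd hB, mir_Uni hU, mir_C1 h1, mir_C2 h2, mir_C3R h3l, mir_C3L h3r, mir_C4 h4⟩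

lemma mir_move {a : ℤ → ℕ} {i : ℤ} :
    mir (moveGrain a i (i-1)) = moveGrain (mir a) (-i) (-i+1) := by
  funext k
  simp only [mir, moveGrain]
  by_cases h1 : k = -i
  · simp [h1, show -(-i : ℤ) = i from by ring, if_pos rfl]
  · have h1' : ¬ (-k = i) := by omega
    by_cases h2 : k = -i+1
    · have h2' : -k = i - 1 := by omega
      simp [h2, h1, h1', h2', show -(-i+1 : ℤ) = i-1 from by ring]
    · have h2' : ¬ (-k = i-1) := by omega
      simp [h1, h2, h1', h2']

lemma inv_init (n : ℕ) : Inv (initConf n) := by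
  have hval : ∀ k : ℤ, k ≠ 0 → initConf n k = 0 := by
    intro k hk; simp [initConf, hk]
  refine ⟨⟨0, 0, fun k hk => hval k (by omega)⟩, ⟨0, ?_, ?_⟩, ?_, ?_, ?_, ?_, ?_⟩
  · intro k hk; rw [hval k (by omega)]; omega
  · intro k hk; rw [hval (k+1) (by omega)]; omega
  · intro i h1 h2 h0
    by_cases hi : i = 0
    · rw [hval (i+1) (by omega)] at h1; omega
    · rw [hval i hi] at h0; omega
  · intro i h1 h2 h3 h4
    by_cases hi : i = 0
    · rw [hval (i+1) (by omega)] at h1; rw [hi] at h1 ⊢; simp [initConf] at h1 ⊢; omega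
    · exact hval i hi
  · intro i j hij h1 h2 h0 h3 h0'
    by_cases hi : i = 0
    · rw [hval (i+1) (by omega)] at h2; omega
    · rw [hval i hi] at h0; omega
  · intro i j hij h1 h2 h0 h3 h0'
    by_cases hi : i = 0
    · rw [hval (i+1) (by omega)] at h2; omega
    · rw [hval i hi] at h0; omega
  · intro t i j h1 h2 h3 h0 hit hpi h0i htj hpj h0j hLC hRC
    by_cases ht : t = 0
    · rw [hval (t+1) (by omega)] at h1; omega
    · rw [hval t ht] at h0; omega

end SSPMDev

namespace SSPMDev

section Pres

variable {a : ℤ → ℕ} {m : ℤ}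

lemma inv_right (hInv : Inv a) (hm : a (m+1) + 2 ≤ a m) :
    Inv (moveGrain a m (m+1)) := by
  obtain ⟨⟨lo, hi, hbd⟩, ⟨j0, hL, hR⟩, h1, h2, h3r, h3l, h4⟩ := hInv
  set b := moveGrain a m (m+1) with hbdef
  have hbm : b m + 1 = a m := by
    have : b m = a m - 1 := by simp [hbdef, moveGrain]
    omega
  have hbm1 : b (m+1) = a (m+1) + 1 := by
    have hne : (m+1 : ℤ) ≠ m := by omega
    simp [hbdef, moveGrain, hne]
  have hbo : ∀ k : ℤ, k ≠ m → k ≠ m+1 → b k = a k := by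
    intro k hk1 hk2
    simp [hbdef, moveGrain, hk1, hk2]
  have hj0m : j0 ≤ m := by
    by_contra hc
    have := hL m (by omega)
    omega
  have hRm : ∀ k : ℤ, m ≤ k → a (k+1) ≤ a k := fun k hk => hR k (by omega)
  have hchainR : ∀ p q : ℤ, m ≤ p → p ≤ q → a q ≤ a p :=
    fun p q hp hpq => chainGe hR p q (by omega) hpq
  -- dichotomy
  have hdix : a m ≤ a (m-1) ∨ (j0 = m ∧ ∀ k : ℤ, k < m → a k ≤ a (k+1)) := by
    by_cases hj : j0 ≤ m - 1
    · left
      have := hR (m-1) (by omega)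
      rw [show m-1+1 = m by ring] at this
      exact this
    · right
      exact ⟨by omega, fun k hk => hL k (by omega)⟩
  have hUni : Uni b := by
    by_cases hx : a m ≤ a (m-1)
    · by_cases hj : j0 ≤ m - 1
      · refine ⟨j0, fun k hk => ?_, fun k hk => ?_⟩
        · rw [hbo k (by omega) (by omega), hbo (k+1) (by omega) (by omega)]
          exact hL k hk
        · by_cases hk1 : k = m - 1
          · subst hk1
            rw [hbo (m-1) (by omega) (by omega), show m-1+1 = m by ring]
            omega
          · by_cases hk2 : k = m
            · subst hk2; omega
            · by_cases hk3 : k = m + 1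
              · subst hk3
                rw [hbo (m+1+1) (by omega) (by omega), hbm1]
                have := hRm (m+1) (by omega)
                omega
              · rw [hbo k (by omega) (by omega), hbo (k+1) (by omega) (by omega)]
                exact hR k hk
      · -- j0 = m, x ≥ u ⇒ x = u : witness m-1
        have hxu : a (m-1) = a m := by
          have := hL (m-1) (by omega)
          rw [show m-1+1 = m by ring] at this
          omega
        refine ⟨m-1, fun k hk => ?_, fun k hk => ?_⟩
        · rw [hbo k (by omega) (by omega), hbo (k+1) (by omega) (by omega)]
          exact hL k (by omega)
        · by_cases hk1 : k = m - 1
          · subst hk1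
            rw [hbo (m-1) (by omega) (by omega), show m-1+1 = m by ring]
            omega
          · by_cases hk2 : k = m
            · subst hk2; omega
            · by_cases hk3 : k = m + 1
              · subst hk3
                rw [hbo (m+1+1) (by omega) (by omega), hbm1]
                have := hRm (m+1) (by omega)
                omega
              · rw [hbo k (by omega) (by omega), hbo (k+1) (by omega) (by omega)]
                exact hR k (by omega)
    · -- x < u ⇒ j0 = m : witness m
      have hj : j0 = m := by
        rcases hdix with h | h
        · omega
        · exact h.1
      refine ⟨m, fun k hk => ?_, fun k hk => ?_⟩
      · by_cases hk1 : k = m - 1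
        · subst hk1
          rw [hbo (m-1) (by omega) (by omega), show m-1+1 = m by ring]
          omega
        · rw [hbo k (by omega) (by omega), hbo (k+1) (by omega) (by omega)]
          exact hL k (by omega)
      · by_cases hk2 : k = m
        · subst hk2; omega
        · by_cases hk3 : k = m + 1
          · subst hk3
            rw [hbo (m+1+1) (by omega) (by omega), hbm1]
            have := hRm (m+1) (by omega)
            omega
          · rw [hbo k (by omega) (by omega), hbo (k+1) (by omega) (by omega)]
            exact hR k (by omega)
  -- x ≥ u unless ascending-to-m
  have hasc : a m ≤ a (m-1) ∨ (∀ k : ℤ, k < m → a k ≤ a (k+1)) := by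
    rcases hdix with h | h
    · exact Or.inl h
    · exact Or.inr h.2
  have hBnd : Bnd b := by
    refine ⟨lo, hi + 1, fun k hk => ?_⟩
    have hma : 0 < a m := by omega
    have hmlo : lo ≤ m := by
      by_contra hc
      have := hbd m (by omega)
      omega
    have hmhi : m ≤ hi := by
      by_contra hc
      have := hbd m (by omega)
      omega
    rw [hbo k (by omega) (by omega)]
    exact hbd k (by omega)
  have aeq : ∀ p q : ℤ, p = q → a p = a q := fun p q h => by rw [h]
  have beq : ∀ p q : ℤ, p = q → b p = b q := fun p q h => by rw [h]
  have hC1 : C1 b := by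
    intro p hp1 hp2 hp0
    by_cases hc1 : p + 3 < m ∨ m + 2 < p - 1
    · have g1 : b (p-1) = a (p-1) := hbo _ (by omega) (by omega)
      have g2 : b p = a p := hbo _ (by omega) (by omega)
      have g3 : b (p+1) = a (p+1) := hbo _ (by omega) (by omega)
      have g4 : b (p+2) = a (p+2) := hbo _ (by omega) (by omega)
      have g5 : b (p+3) = a (p+3) := hbo _ (by omega) (by omega)
      have H := h1 p (by omega) (by omega) (by omega)
      omega
    · push_neg at hc1
      by_cases hd3 : p = m - 3
      · subst hd3
        have g1 : b (m-3) = a (m-3) := hbo _ (by omega) (by omega)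
        have g2 : b (m-3+1) = a (m-3+1) := hbo _ (by omega) (by omega)
        have g3 : b (m-3+2) = a (m-3+2) := hbo _ (by omega) (by omega)
        have g4 : b (m-3-1) = a (m-3-1) := hbo _ (by omega) (by omega)
        have g5 : b (m-3+3) = b m := beq _ _ (by ring)
        have e1 : a (m-3+2) = a (m-1) := aeq _ _ (by ring)
        have H := h1 (m-3) (by omega) (by omega) (by omega)
        have e2 : a (m-3+3) = a m := aeq _ _ (by ring)
        omega
      by_cases hd2 : p = m - 2
      · subst hd2
        have g1 : b (m-2) = a (m-2) := hbo _ (by omega) (by omega)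
        have g2 : b (m-2+1) = a (m-2+1) := hbo _ (by omega) (by omega)
        have g3 : b (m-2+2) = b m := beq _ _ (by ring)
        have g4 : b (m-2-1) = a (m-2-1) := hbo _ (by omega) (by omega)
        have g5 : b (m-2+3) = b (m+1) := beq _ _ (by ring)
        have e1 : a (m-2+1) = a (m-1) := aeq _ _ (by ring)
        -- hp2 : b (m-2+1) = b (m-2+2) : a (m-1) = a m - 1 < a m
        rcases hasc with hca | hca
        · omega
        · have hca1 := hca (m-2-1) (by omega)
          have e2 : a (m-2-1+1) = a (m-2) := aeq _ _ (by ring)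
          omega
      by_cases hd1 : p = m - 1
      · subst hd1
        have g1 : b (m-1) = a (m-1) := hbo _ (by omega) (by omega)
        have g2 : b (m-1+1) = b m := beq _ _ (by ring)
        have g3 : b (m-1+2) = b (m+1) := beq _ _ (by ring)
        have g4 : b (m-1-1) = a (m-1-1) := hbo _ (by omega) (by omega)
        have g5 : b (m-1+3) = a (m+2) := by
          have : b (m-1+3) = b (m+2) := beq _ _ (by ring)
          rw [this]; exact hbo _ (by omega) (by omega)
        rcases hasc with hca | hca
        · omega
        · have hca1 := hca (m-1-1) (by omega)
          have e2 : a (m-1-1+1) = a (m-1) := aeq _ _ (by ring)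
          have hy := hRm (m+1) (by omega)
          have e3 : a (m+1+1) = a (m+2) := aeq _ _ (by ring)
          omega
      by_cases hd0 : p = m
      · have q1 : b (p+1) = b (m+1) := beq _ _ (by omega)
        have q2 : b (p+2) = a (m+2) := by
          have h' : b (p+2) = b (m+2) := beq _ _ (by omega)
          rw [h']; exact hbo _ (by omega) (by omega)
        have hy := hRm (m+1) (by omega)
        have e3 : a (m+1+1) = a (m+2) := aeq _ _ (by ring)
        omega
      by_cases he1 : p = m + 1
      · have q1 : b p = b (m+1) := beq _ _ (by omega)
        have q2 : b (p+1) = a (m+2) := by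
          have h' : b (p+1) = b (m+2) := beq _ _ (by omega)
          rw [h']; exact hbo _ (by omega) (by omega)
        have hy := hRm (m+1) (by omega)
        have e3 : a (m+1+1) = a (m+2) := aeq _ _ (by ring)
        omega
      by_cases he2 : p = m + 2
      · subst he2
        have g1 : b (m+2) = a (m+2) := hbo _ (by omega) (by omega)
        have g2 : b (m+2+1) = a (m+2+1) := hbo _ (by omega) (by omega)
        have g3 : b (m+2+2) = a (m+2+2) := hbo _ (by omega) (by omega)
        have g4 : b (m+2-1) = b (m+1) := beq _ _ (by ring)
        have g5 : b (m+2+3) = a (m+2+3) := hbo _ (by omega) (by omega)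
        have H := h1 (m+2) (by omega) (by omega) (by omega)
        have e1 : a (m+2-1) = a (m+1) := aeq _ _ (by ring)
        have hy := hRm (m+1) (by omega)
        have e3 : a (m+1+1) = a (m+2) := aeq _ _ (by ring)
        -- H.1 : a (m+1) ≤ a (m+2); with hy : a (m+2) ≤ a (m+1) get equality, then 4-run
        have e4 : a (m+1-1) = a m := aeq _ _ (by ring)
        have e5 : a (m+1+2) = a (m+2+1) := aeq _ _ (by ring)
        have H2 := h1 (m+1) (by omega) (by omega) (by omega)
        omega
      · have he3 : p = m + 3 := by omega
        subst he3
        have g1 : b (m+3) = a (m+3) := hbo _ (by omega) (by omega)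
        have g2 : b (m+3+1) = a (m+3+1) := hbo _ (by omega) (by omega)
        have g3 : b (m+3+2) = a (m+3+2) := hbo _ (by omega) (by omega)
        have g4 : b (m+3-1) = a (m+3-1) := hbo _ (by omega) (by omega)
        have g5 : b (m+3+3) = a (m+3+3) := hbo _ (by omega) (by omega)
        have H := h1 (m+3) (by omega) (by omega) (by omega)
        omega
  have hC2 : C2 b := by
    intro p hp1 hp2 hp3 hp4
    by_cases hc1 : p + 4 < m ∨ m + 1 < p
    · have g0 : b p = a p := hbo _ (by omega) (by omega)
      have g1 : b (p+1) = a (p+1) := hbo _ (by omega) (by omega)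
      have g2 : b (p+2) = a (p+2) := hbo _ (by omega) (by omega)
      have g3 : b (p+3) = a (p+3) := hbo _ (by omega) (by omega)
      have g4 : b (p+4) = a (p+4) := hbo _ (by omega) (by omega)
      have H := h2 p (by omega) (by omega) (by omega) (by omega)
      omega
    · push_neg at hc1
      rcases Nat.eq_zero_or_pos (b p) with h0 | h0
      · exact h0
      exfalso
      by_cases hA : p = m + 1
      · subst hA
        have q1 : b (m+1+1) = a (m+2) := by
          have h' : b (m+1+1) = b (m+2) := beq _ _ (by ring)
          rw [h']; exact hbo _ (by omega) (by omega)
        have hy := hRm (m+1) (by omega)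
        have e1 : a (m+1+1) = a (m+2) := aeq _ _ (by ring)
        omega
      by_cases hB : p = m
      · have q0 : b p = b m := beq _ _ hB
        have q1 : b (p+1) = b (m+1) := beq _ _ (by omega)
        have q2 : b (p+2) = a (m+2) := by
          have h' : b (p+2) = b (m+2) := beq _ _ (by omega)
          rw [h']; exact hbo _ (by omega) (by omega)
        have hy := hRm (m+1) (by omega)
        have e1 : a (m+1+1) = a (m+2) := aeq _ _ (by ring)
        omega
      by_cases hC : p = m - 1
      · subst hC
        have q1 : b (m-1+1) = b m := beq _ _ (by ring)
        have q2 : b (m-1+2) = b (m+1) := beq _ _ (by ring)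
        have q3 : b (m-1+3) = a (m+2) := by
          have h' : b (m-1+3) = b (m+2) := beq _ _ (by ring)
          rw [h']; exact hbo _ (by omega) (by omega)
        have hy := hRm (m+1) (by omega)
        have e1 : a (m+1+1) = a (m+2) := aeq _ _ (by ring)
        omega
      by_cases hD : p = m - 2
      · subst hD
        have q2 : b (m-2+2) = b m := beq _ _ (by ring)
        have q3 : b (m-2+3) = b (m+1) := beq _ _ (by ring)
        have q4 : b (m-2+4) = a (m+2) := by
          have h' : b (m-2+4) = b (m+2) := beq _ _ (by ring)
          rw [h']; exact hbo _ (by omega) (by omega)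
        have hy := hRm (m+1) (by omega)
        have e1 : a (m+1+1) = a (m+2) := aeq _ _ (by ring)
        omega
      by_cases hE : p = m - 3
      · subst hE
        have g0 : b (m-3) = a (m-3) := hbo _ (by omega) (by omega)
        have g1 : b (m-3+1) = a (m-3+1) := hbo _ (by omega) (by omega)
        have g2 : b (m-3+2) = a (m-3+2) := hbo _ (by omega) (by omega)
        have q3 : b (m-3+3) = b m := beq _ _ (by ring)
        have H := h1 (m-3) (by omega) (by omega) (by omega)
        have e1 : a (m-3+3) = a m := aeq _ _ (by ring)
        omega
      · have hF : p = m - 4 := by omega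
        subst hF
        have g0 : b (m-4) = a (m-4) := hbo _ (by omega) (by omega)
        have g1 : b (m-4+1) = a (m-4+1) := hbo _ (by omega) (by omega)
        have g2 : b (m-4+2) = a (m-4+2) := hbo _ (by omega) (by omega)
        have g3 : b (m-4+3) = a (m-4+3) := hbo _ (by omega) (by omega)
        have e1 : a (m-4+1) = a (m-3) := aeq _ _ (by ring)
        have e2 : a (m-4+2) = a (m-3+1) := aeq _ _ (by ring)
        have e3 : a (m-4+3) = a (m-3+2) := aeq _ _ (by ring)
        have q4 : b (m-4+4) = b m := beq _ _ (by ring)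
        have H := h1 (m-3) (by omega) (by omega) (by omega)
        have e4 : a (m-3+3) = a m := aeq _ _ (by ring)
        omega
  have hC3R : C3R b := by
    intro i j hij hP1 hP2 hP0 hP3 hP0'
    by_cases hiA : i = m - 1
    · exfalso
      have g1 : b (m-1) = a (m-1) := hbo _ (by omega) (by omega)
      have g2 : b (m-1+1) = b m := beq _ _ (by ring)
      have g3 : b (m-1-1) = a (m-2) := by
        have h' : b (m-1-1) = b (m-2) := beq _ _ (by ring)
        rw [h']; exact hbo _ (by omega) (by omega)
      subst hiA
      rcases hasc with hca | hca
      · omega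
      · have c1 := hca (m-2) (by omega)
        have e1 : a (m-2+1) = a (m-1) := aeq _ _ (by ring)
        omega
    by_cases hiB : i = m
    · -- pair (m, m+1) : u = v+2 ; x ≥ u
      have q1 : b i = b m := beq _ _ hiB
      have q2 : b (i+1) = b (m+1) := beq _ _ (by omega)
      have q3 : b (i-1) = a (m-1) := by
        have h' : b (i-1) = b (m-1) := beq _ _ (by omega)
        rw [h']; exact hbo _ (by omega) (by omega)
      -- decide cliff at m+1
      by_cases hcl : b (m+2) + 2 ≤ b (m+1)
      · exact ⟨m+1, by omega, by omega, by
          have h' : b (m+1+1) = b (m+2) := beq _ _ (by ring)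
          omega⟩
      · -- a (m+2) = a (m+1)
        have g4 : b (m+2) = a (m+2) := hbo _ (by omega) (by omega)
        have hy := hRm (m+1) (by omega)
        have e1 : a (m+1+1) = a (m+2) := aeq _ _ (by ring)
        have hpair : a (m+1) = a (m+2) := by omega
        have g5 : b j = a j := hbo _ (by omega) (by omega)
        have g6 : b (j+1) = a (j+1) := hbo _ (by omega) (by omega)
        by_cases hj2 : j = m + 2
        · exfalso
          subst hj2
          have e2 : a (m+2+1) = a (m+1+2) := aeq _ _ (by ring)
          have H := h1 (m+1) (by omega) (by omega) (by omega)
          have e3 : a (m+1-1) = a m := aeq _ _ (by ring)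
          omega
        · have hpos : 0 < a (m+1) := by
            have := hchainR (m+1) j (by omega) (by omega)
            omega
          have e4 : a (m+1-1) = a m := aeq _ _ (by ring)
          have e5 : a (m+1+1) = a (m+2) := aeq _ _ (by ring)
          obtain ⟨k, hk1, hk2, hk3⟩ := h3r (m+1) j (by omega) (by omega) (by omega)
            (by omega) (by omega) (by omega)
          refine ⟨k, by omega, by omega, ?_⟩
          have gk : b k = a k := hbo _ (by omega) (by omega)
          have gk1 : b (k+1) = a (k+1) := hbo _ (by omega) (by omega)
          omega
    by_cases hiC : i = m + 1
    · exfalso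
      have q1 : b i = b (m+1) := beq _ _ hiC
      have q2 : b (i+1) = a (m+2) := by
        have h' : b (i+1) = b (m+2) := beq _ _ (by omega)
        rw [h']; exact hbo _ (by omega) (by omega)
      have hy := hRm (m+1) (by omega)
      have e1 : a (m+1+1) = a (m+2) := aeq _ _ (by ring)
      omega
    by_cases hiD : m + 2 ≤ i
    · -- i ≥ m+2
      have g1 : b i = a i := hbo _ (by omega) (by omega)
      have g2 : b (i+1) = a (i+1) := hbo _ (by omega) (by omega)
      have g5 : b j = a j := hbo _ (by omega) (by omega)
      have g6 : b (j+1) = a (j+1) := hbo _ (by omega) (by omega)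
      by_cases hiD2 : i = m + 2
      · -- b (i-1) = b (m+1) = v+1
        have q3 : b (i-1) = b (m+1) := beq _ _ (by omega)
        have hy := hRm (m+1) (by omega)
        have e1 : a (m+1+1) = a (m+2) := aeq _ _ (by ring)
        have q4 : a i = a (m+2) := aeq _ _ (by omega)
        by_cases hlt : a i < a (i-1)
        · obtain ⟨k, hk1, hk2, hk3⟩ := h3r i j hij hlt (by omega) (by omega) (by omega) (by omega)
          refine ⟨k, by omega, by omega, ?_⟩
          have gk : b k = a k := hbo _ (by omega) (by omega)
          have gk1 : b (k+1) = a (k+1) := hbo _ (by omega) (by omega)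
          omega
        · -- a (m+2) = a (m+1): pair (m+1, m+2) in a
          have q5 : a (i-1) = a (m+1) := aeq _ _ (by omega)
          have e4 : a (m+1-1) = a m := aeq _ _ (by ring)
          have hpos : 0 < a (m+1) := by
            have := hchainR (m+1) j (by omega) (by omega)
            omega
          obtain ⟨k, hk1, hk2, hk3⟩ := h3r (m+1) j (by omega) (by omega) (by omega)
            (by omega) (by omega) (by omega)
          by_cases hki : k = m + 2
          · exfalso
            have q6 : a (k+1) = a (i+1) := aeq _ _ (by omega)
            have q7 : a k = a i := aeq _ _ (by omega)
            omega
          · refine ⟨k, by omega, by omega, ?_⟩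
            have gk : b k = a k := hbo _ (by omega) (by omega)
            have gk1 : b (k+1) = a (k+1) := hbo _ (by omega) (by omega)
            omega
      · have g3 : b (i-1) = a (i-1) := hbo _ (by omega) (by omega)
        obtain ⟨k, hk1, hk2, hk3⟩ := h3r i j hij (by omega) (by omega) (by omega) (by omega) (by omega)
        refine ⟨k, by omega, by omega, ?_⟩
        have gk : b k = a k := hbo _ (by omega) (by omega)
        have gk1 : b (k+1) = a (k+1) := hbo _ (by omega) (by omega)
        omega
    · -- i ≤ m-2
      have hile : i ≤ m - 2 := by omega
      have g1 : b i = a i := hbo _ (by omega) (by omega)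
      have g2 : b (i+1) = a (i+1) := hbo _ (by omega) (by omega)
      have g3 : b (i-1) = a (i-1) := hbo _ (by omega) (by omega)
      -- descending from i-1
      have hdesc : j0 ≤ i - 1 := by
        by_contra hc
        have := hL (i-1) (by omega)
        have e1 : a (i-1+1) = a i := aeq _ _ (by ring)
        omega
      have hxu : a m ≤ a (m-1) := by
        have := hR (m-1) (by omega)
        have e1 : a (m-1+1) = a m := aeq _ _ (by ring)
        omega
      by_cases hjA : j ≤ m - 2
      · have g5 : b j = a j := hbo _ (by omega) (by omega)
        have g6 : b (j+1) = a (j+1) := hbo _ (by omega) (by omega)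
        obtain ⟨k, hk1, hk2, hk3⟩ := h3r i j hij (by omega) (by omega) (by omega) (by omega) (by omega)
        refine ⟨k, by omega, by omega, ?_⟩
        have gk : b k = a k := hbo _ (by omega) (by omega)
        have gk1 : b (k+1) = a (k+1) := hbo _ (by omega) (by omega)
        omega
      by_cases hjB : j = m - 1
      · exfalso
        have q1 : b j = a (m-1) := by
          have h' : b j = b (m-1) := beq _ _ (by omega)
          rw [h']; exact hbo _ (by omega) (by omega)
        have q2 : b (j+1) = b m := beq _ _ (by omega)
        omega
      by_cases hjC : j = m
      · -- pair (m, m+1) as second pair : u = v+2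
        have q1 : b j = b m := beq _ _ (by omega)
        have q2 : b (j+1) = b (m+1) := beq _ _ (by omega)
        by_cases hcl : b m + 2 ≤ b (m-1)
        · exact ⟨m-1, by omega, by omega, by
            have h' : b (m-1+1) = b m := beq _ _ (by ring)
            have g' : b (m-1) = a (m-1) := hbo _ (by omega) (by omega)
            omega⟩
        · -- x = u : pair (m-1, m) in a
          have g4 : b (m-1) = a (m-1) := hbo _ (by omega) (by omega)
          have hxeq : a (m-1) = a m := by omega
          by_cases hi2 : i = m - 2
          · exfalso
            have q4 : a i = a (m-2) := aeq _ _ (by omega)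
            have q5 : a (i+1) = a (m-2+1) := aeq _ _ (by omega)
            have e1 : a (m-2+1) = a (m-1) := aeq _ _ (by ring)
            have e2 : a (m-2+2) = a m := aeq _ _ (by ring)
            have H := h1 (m-2) (by omega) (by omega) (by omega)
            have q6 : a (i-1) = a (m-2-1) := aeq _ _ (by omega)
            omega
          · have e1 : a (m-1+1) = a m := aeq _ _ (by ring)
            obtain ⟨k, hk1, hk2, hk3⟩ := h3r i (m-1) (by omega) (by omega) (by omega)
              (by omega) (by omega) (by omega)
            refine ⟨k, by omega, by omega, ?_⟩
            have gk : b k = a k := hbo _ (by omega) (by omega)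
            have gk1 : b (k+1) = a (k+1) := hbo _ (by omega) (by omega)
            omega
      by_cases hjD : j = m + 1
      · exfalso
        have q1 : b j = b (m+1) := beq _ _ (by omega)
        have q2 : b (j+1) = a (m+2) := by
          have h' : b (j+1) = b (m+2) := beq _ _ (by omega)
          rw [h']; exact hbo _ (by omega) (by omega)
        have hy := hRm (m+1) (by omega)
        have e1 : a (m+1+1) = a (m+2) := aeq _ _ (by ring)
        omega
      · -- j ≥ m+2
        have hjge : m + 2 ≤ j := by omega
        have g5 : b j = a j := hbo _ (by omega) (by omega)
        have g6 : b (j+1) = a (j+1) := hbo _ (by omega) (by omega)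
        by_cases hcl1 : b m + 2 ≤ b (m-1)
        · exact ⟨m-1, by omega, by omega, by
            have h' : b (m-1+1) = b m := beq _ _ (by ring)
            have g' : b (m-1) = a (m-1) := hbo _ (by omega) (by omega)
            omega⟩
        by_cases hcl2 : b (m+1) + 2 ≤ b m
        · exact ⟨m, by omega, by omega, by
            have h' : b (m+1) = b (m+1) := rfl
            omega⟩
        by_cases hcl3 : b (m+2) + 2 ≤ b (m+1)
        · exact ⟨m+1, by omega, by omega, by
            have h' : b (m+1+1) = b (m+2) := beq _ _ (by ring)
            omega⟩
        · -- a (m+1) = a (m+2) pair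
          have g7 : b (m+2) = a (m+2) := hbo _ (by omega) (by omega)
          have g4 : b (m-1) = a (m-1) := hbo _ (by omega) (by omega)
          have hy := hRm (m+1) (by omega)
          have e1 : a (m+1+1) = a (m+2) := aeq _ _ (by ring)
          have hpair : a (m+1) = a (m+2) := by omega
          by_cases hj2 : j = m + 2
          · exfalso
            subst hj2
            have e2 : a (m+2+1) = a (m+1+2) := aeq _ _ (by ring)
            have H := h1 (m+1) (by omega) (by omega) (by omega)
            have e3 : a (m+1-1) = a m := aeq _ _ (by ring)
            omega
          · have hpos : 0 < a (m+1) := by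
              have := hchainR (m+1) j (by omega) (by omega)
              omega
            have e4 : a (m+1-1) = a m := aeq _ _ (by ring)
            obtain ⟨k, hk1, hk2, hk3⟩ := h3r (m+1) j (by omega) (by omega) (by omega)
              (by omega) (by omega) (by omega)
            refine ⟨k, by omega, by omega, ?_⟩
            have gk : b k = a k := hbo _ (by omega) (by omega)
            have gk1 : b (k+1) = a (k+1) := hbo _ (by omega) (by omega)
            omega
  have hC3L : C3L b := by
    intro i j hij hP1 hP2 hP0 hP3 hP0'
    by_cases hiA : i ≤ m - 3
    · have g1 : b i = a i := hbo _ (by omega) (by omega)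
      have g2 : b (i+1) = a (i+1) := hbo _ (by omega) (by omega)
      have g3 : b (i+2) = a (i+2) := hbo _ (by omega) (by omega)
      have g5 : b j = a j := hbo _ (by omega) (by omega)
      have g6 : b (j+1) = a (j+1) := hbo _ (by omega) (by omega)
      obtain ⟨k, hk1, hk2, hk3⟩ := h3l i j hij (by omega) (by omega) (by omega) (by omega) (by omega)
      refine ⟨k, by omega, by omega, ?_⟩
      have gk : b k = a k := hbo _ (by omega) (by omega)
      have gk1 : b (k+1) = a (k+1) := hbo _ (by omega) (by omega)
      omega
    by_cases hiB : i = m - 2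
    · have q1 : b i = a (m-2) := by
        have h' : b i = b (m-2) := beq _ _ (by omega)
        rw [h']; exact hbo _ (by omega) (by omega)
      have q2 : b (i+1) = a (m-1) := by
        have h' : b (i+1) = b (m-1) := beq _ _ (by omega)
        rw [h']; exact hbo _ (by omega) (by omega)
      have q3 : b (i+2) = b m := beq _ _ (by omega)
      have g5 : b j = a j := hbo _ (by omega) (by omega)
      have g6 : b (j+1) = a (j+1) := hbo _ (by omega) (by omega)
      have e1 : a (m-2+1) = a (m-1) := aeq _ _ (by ring)
      have e2 : a (m-2+2) = a m := aeq _ _ (by ring)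
      have q4 : a i = a (m-2) := aeq _ _ (by omega)
      have q5 : a (i+1) = a (m-1) := aeq _ _ (by omega)
      obtain ⟨k, hk1, hk2, hk3⟩ := h3l (m-2) j (by omega) (by omega) (by omega) (by omega)
        (by omega) (by omega)
      refine ⟨k, by omega, by omega, ?_⟩
      have gk : b k = a k := hbo _ (by omega) (by omega)
      have gk1 : b (k+1) = a (k+1) := hbo _ (by omega) (by omega)
      omega
    by_cases hiC : i = m - 1
    · exfalso
      have q2 : b (i+1) = b m := beq _ _ (by omega)
      have q3 : b (i+2) = b (m+1) := beq _ _ (by omega)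
      omega
    by_cases hiD : i = m
    · exfalso
      have q2 : b (i+1) = b (m+1) := beq _ _ (by omega)
      have q3 : b (i+2) = a (m+2) := by
        have h' : b (i+2) = b (m+2) := beq _ _ (by omega)
        rw [h']; exact hbo _ (by omega) (by omega)
      have hy := hRm (m+1) (by omega)
      have e1 : a (m+1+1) = a (m+2) := aeq _ _ (by ring)
      omega
    by_cases hiE : i = m + 1
    · exfalso
      have q1 : b i = b (m+1) := beq _ _ (by omega)
      have q2 : b (i+1) = a (m+2) := by
        have h' : b (i+1) = b (m+2) := beq _ _ (by omega)
        rw [h']; exact hbo _ (by omega) (by omega)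
      have hy := hRm (m+1) (by omega)
      have e1 : a (m+1+1) = a (m+2) := aeq _ _ (by ring)
      omega
    · exfalso
      -- i ≥ m+2 : rise on descending side
      have g2 : b (i+1) = a (i+1) := hbo _ (by omega) (by omega)
      have g3 : b (i+2) = a (i+2) := hbo _ (by omega) (by omega)
      have hy := hRm (i+1) (by omega)
      have e1 : a (i+1+1) = a (i+2) := aeq _ _ (by ring)
      omega
  have hC4 : C4 b := by
    intro t i j ht1 ht2 ht3 ht0 hit hpi h0i htj hpj h0j hLC hRC
    by_cases htA : t ≤ m - 4
    · -- run fully left of m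
      have g0 : b t = a t := hbo _ (by omega) (by omega)
      have g1 : b (t+1) = a (t+1) := hbo _ (by omega) (by omega)
      have g2 : b (t+2) = a (t+2) := hbo _ (by omega) (by omega)
      have g3 : b (t+3) = a (t+3) := hbo _ (by omega) (by omega)
      have gi : b i = a i := hbo _ (by omega) (by omega)
      have gi1 : b (i+1) = a (i+1) := hbo _ (by omega) (by omega)
      -- x ≥ u
      have hxu : a m ≤ a (m-1) := by
        rcases hasc with hca | hca
        · exact hca
        · exfalso
          have c1 := hca (t+3) (by omega)
          have e1 : a (t+3+1) = a (t+1+3) := aeq _ _ (by ring)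
          have e2 : a (t+1+1) = a (t+2) := aeq _ _ (by ring)
          have e3 : a (t+1+2) = a (t+3) := aeq _ _ (by ring)
          have H := h1 (t+1) (by omega) (by omega) (by omega)
          -- 5-run : C2
          have e4 : a (t+3+1) = a (t+4) := aeq _ _ (by ring)
          have e5 : a (t+1+3) = a (t+4) := aeq _ _ (by ring)
          have H2 := h2 t (by omega) (by omega) (by omega) (by omega)
          omega
      by_cases hjA : j ≤ m - 2
      · have gj : b j = a j := hbo _ (by omega) (by omega)
        have gj1 : b (j+1) = a (j+1) := hbo _ (by omega) (by omega)
        refine h4 t i j (by omega) (by omega) (by omega) (by omega) (by omega) (by omega)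
          (by omega) (by omega) (by omega) (by omega) ?_ ?_
        · intro k hk1 hk2
          have := hLC k (by omega) (by omega)
          have gk : b k = a k := hbo _ (by omega) (by omega)
          have gk1 : b (k+1) = a (k+1) := hbo _ (by omega) (by omega)
          omega
        · intro k hk1 hk2
          have := hRC k (by omega) (by omega)
          have gk : b k = a k := hbo _ (by omega) (by omega)
          have gk1 : b (k+1) = a (k+1) := hbo _ (by omega) (by omega)
          omega
      by_cases hjB : j = m - 1
      · have q1 : b j = a (m-1) := by
          have h' : b j = b (m-1) := beq _ _ (by omega)
          rw [h']; exact hbo _ (by omega) (by omega)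
        have q2 : b (j+1) = b m := beq _ _ (by omega)
        omega
      by_cases hjC : j = m
      · -- u = v+2, RC k = m-1 gives x = u : pair (m-1, m) in a
        have q1 : b j = b m := beq _ _ (by omega)
        have q2 : b (j+1) = b (m+1) := beq _ _ (by omega)
        have hrc := hRC (m-1) (by omega) (by omega)
        have q3 : b (m-1) = a (m-1) := hbo _ (by omega) (by omega)
        have q4 : b (m-1+1) = b m := beq _ _ (by ring)
        have hxeq : a (m-1) = a m := by omega
        by_cases ht3 : t + 3 = m - 1
        · -- 5-run in a
          have e1 : a (t+3) = a (m-1) := aeq _ _ (by omega)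
          have e2 : a (t+4) = a m := aeq _ _ (by omega)
          have e3 : a (t+3+1) = a (t+4) := aeq _ _ (by ring)
          have H2 := h2 t (by omega) (by omega) (by omega) (by omega)
          omega
        · have e1 : a (m-1+1) = a m := aeq _ _ (by ring)
          refine h4 t i (m-1) (by omega) (by omega) (by omega) (by omega) (by omega)
            (by omega) (by omega) (by omega) (by omega) (by omega) ?_ ?_
          · intro k hk1 hk2
            have := hLC k (by omega) (by omega)
            have gk : b k = a k := hbo _ (by omega) (by omega)
            have gk1 : b (k+1) = a (k+1) := hbo _ (by omega) (by omega)
            omega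
          · intro k hk1 hk2
            have := hRC k (by omega) (by omega)
            have gk : b k = a k := hbo _ (by omega) (by omega)
            have gk1 : b (k+1) = a (k+1) := hbo _ (by omega) (by omega)
            omega
      by_cases hjD : j = m + 1
      · have q1 : b j = b (m+1) := beq _ _ (by omega)
        have q2 : b (j+1) = a (m+2) := by
          have h' : b (j+1) = b (m+2) := beq _ _ (by omega)
          rw [h']; exact hbo _ (by omega) (by omega)
        have hy := hRm (m+1) (by omega)
        have e1 : a (m+1+1) = a (m+2) := aeq _ _ (by ring)
        omega
      · -- j ≥ m+2
        have hjge : m + 2 ≤ j := by omega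
        have gj : b j = a j := hbo _ (by omega) (by omega)
        have gj1 : b (j+1) = a (j+1) := hbo _ (by omega) (by omega)
        have hrc1 := hRC (m+1) (by omega) (by omega)
        have q7 : b (m+2) = a (m+2) := hbo _ (by omega) (by omega)
        have q8 : b (m+1+1) = b (m+2) := beq _ _ (by ring)
        have hy := hRm (m+1) (by omega)
        have e1 : a (m+1+1) = a (m+2) := aeq _ _ (by ring)
        have hpair : a (m+1) = a (m+2) := by omega
        by_cases hj2 : j = m + 2
        · have e2 : a (m+2+1) = a (m+1+2) := aeq _ _ (by ring)
          have q9 : a j = a (m+2) := aeq _ _ (by omega)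
          have q10 : a (j+1) = a (m+2+1) := aeq _ _ (by omega)
          have H := h1 (m+1) (by omega) (by omega) (by omega)
          have e3 : a (m+1-1) = a m := aeq _ _ (by ring)
          omega
        · have hpos : 0 < a (m+1) := by
            have := hchainR (m+1) j (by omega) (by omega)
            omega
          have e4 : a (m+1-1) = a m := aeq _ _ (by ring)
          obtain ⟨k, hk1, hk2, hk3⟩ := h3r (m+1) j (by omega) (by omega) (by omega)
            (by omega) (by omega) (by omega)
          have hrck := hRC k (by omega) (by omega)
          have gk : b k = a k := hbo _ (by omega) (by omega)
          have gk1 : b (k+1) = a (k+1) := hbo _ (by omega) (by omega)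
          omega
    by_cases htB : t = m - 3
    · subst htB
      have g0 : b (m-3) = a (m-3) := hbo _ (by omega) (by omega)
      have g1 : b (m-3+1) = a (m-3+1) := hbo _ (by omega) (by omega)
      have g2 : b (m-3+2) = a (m-3+2) := hbo _ (by omega) (by omega)
      have q3 : b (m-3+3) = b m := beq _ _ (by ring)
      have H := h1 (m-3) (by omega) (by omega) (by omega)
      have e1 : a (m-3+3) = a m := aeq _ _ (by ring)
      omega
    by_cases htC : t = m - 2
    · subst htC
      -- run [m-2, m+1] : a(m-2) = a(m-1) = u-1, u = v+2
      have g0 : b (m-2) = a (m-2) := hbo _ (by omega) (by omega)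
      have g1 : b (m-2+1) = a (m-1) := by
        have h' : b (m-2+1) = b (m-1) := beq _ _ (by ring)
        rw [h']; exact hbo _ (by omega) (by omega)
      have q2 : b (m-2+2) = b m := beq _ _ (by ring)
      have q3 : b (m-2+3) = b (m+1) := beq _ _ (by ring)
      have gi : b i = a i := hbo _ (by omega) (by omega)
      have gi1 : b (i+1) = a (i+1) := hbo _ (by omega) (by omega)
      have e1 : a (m-2+1) = a (m-1) := aeq _ _ (by ring)
      have e2 : a (m-2+2) = a m := aeq _ _ (by ring)
      obtain ⟨k, hk1, hk2, hk3⟩ := h3l (m-2) i (by omega) (by omega) (by omega) (by omega)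
        (by omega) (by omega)
      have hlck := hLC k (by omega) (by omega)
      have gk : b k = a k := hbo _ (by omega) (by omega)
      have gk1 : b (k+1) = a (k+1) := hbo _ (by omega) (by omega)
      omega
    by_cases htD : t = m - 1
    · subst htD
      have q2 : b (m-1+2) = b (m+1) := beq _ _ (by ring)
      have q3 : b (m-1+3) = a (m+2) := by
        have h' : b (m-1+3) = b (m+2) := beq _ _ (by ring)
        rw [h']; exact hbo _ (by omega) (by omega)
      have hy := hRm (m+1) (by omega)
      have e1 : a (m+1+1) = a (m+2) := aeq _ _ (by ring)
      omega
    by_cases htE : t = m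
    · have q1 : b (t+2) = b (m+2) := beq _ _ (by omega)
      have q2 : b (t+1) = b (m+1) := beq _ _ (by omega)
      have q3 : b (m+2) = a (m+2) := hbo _ (by omega) (by omega)
      have hy := hRm (m+1) (by omega)
      have e1 : a (m+1+1) = a (m+2) := aeq _ _ (by ring)
      omega
    by_cases htF : t = m + 1
    · have q1 : b t = b (m+1) := beq _ _ (by omega)
      have q2 : b (t+1) = a (m+2) := by
        have h' : b (t+1) = b (m+2) := beq _ _ (by omega)
        rw [h']; exact hbo _ (by omega) (by omega)
      have hy := hRm (m+1) (by omega)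
      have e1 : a (m+1+1) = a (m+2) := aeq _ _ (by ring)
      omega
    · -- t ≥ m+2
      have htge : m + 2 ≤ t := by omega
      by_cases hiA : m + 2 ≤ i
      · -- full transfer
        have g0 : b t = a t := hbo _ (by omega) (by omega)
        have g1 : b (t+1) = a (t+1) := hbo _ (by omega) (by omega)
        have g2 : b (t+2) = a (t+2) := hbo _ (by omega) (by omega)
        have g3 : b (t+3) = a (t+3) := hbo _ (by omega) (by omega)
        have gi : b i = a i := hbo _ (by omega) (by omega)
        have gi1 : b (i+1) = a (i+1) := hbo _ (by omega) (by omega)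
        have gj : b j = a j := hbo _ (by omega) (by omega)
        have gj1 : b (j+1) = a (j+1) := hbo _ (by omega) (by omega)
        refine h4 t i j (by omega) (by omega) (by omega) (by omega) (by omega) (by omega)
          (by omega) (by omega) (by omega) (by omega) ?_ ?_
        · intro k hk1 hk2
          have := hLC k (by omega) (by omega)
          have gk : b k = a k := hbo _ (by omega) (by omega)
          have gk1 : b (k+1) = a (k+1) := hbo _ (by omega) (by omega)
          omega
        · intro k hk1 hk2
          have := hRC k (by omega) (by omega)
          have gk : b k = a k := hbo _ (by omega) (by omega)
          have gk1 : b (k+1) = a (k+1) := hbo _ (by omega) (by omega)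
          omega
      by_cases hiB : i = m + 1
      · have q1 : b i = b (m+1) := beq _ _ (by omega)
        have q2 : b (i+1) = a (m+2) := by
          have h' : b (i+1) = b (m+2) := beq _ _ (by omega)
          rw [h']; exact hbo _ (by omega) (by omega)
        have hy := hRm (m+1) (by omega)
        have e1 : a (m+1+1) = a (m+2) := aeq _ _ (by ring)
        omega
      · -- i ≤ m : use LC at k = m+1
        have hlc := hLC (m+1) (by omega) (by omega)
        have q1 : b (m+1+1) = a (m+2) := by
          have h' : b (m+1+1) = b (m+2) := beq _ _ (by ring)
          rw [h']; exact hbo _ (by omega) (by omega)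
        have hy := hRm (m+1) (by omega)
        have e1 : a (m+1+1) = a (m+2) := aeq _ _ (by ring)
        omega
  exact ⟨hBnd, hUni, hC1, hC2, hC3R, hC3L, hC4⟩

end Pres

end SSPMDev

namespace SSPMDev

lemma inv_step {a b : ℤ → ℕ} (hInv : Inv a) (h : sspmStep a b) : Inv b := by
  obtain ⟨i, hr | hl⟩ := h
  · obtain ⟨hcond, rfl⟩ := hr
    exact inv_right hInv hcond
  · obtain ⟨hcond, rfl⟩ := hl
    have h1 : Inv (mir a) := mir_Inv hInv
    have h2 : (mir a) ((-i) + 1) + 2 ≤ (mir a) (-i) := by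
      simp only [mir_apply]
      have e1 : (-(-i+1) : ℤ) = i - 1 := by ring
      have e2 : (-(-i) : ℤ) = i := by ring
      rw [e1, e2]
      exact hcond
    have h3 := inv_right h1 h2
    rw [← mir_move] at h3
    have h4 := mir_Inv h3
    rwa [mir_mir] at h4

lemma inv_reach {n : ℕ} {c : ℤ → ℕ} (h : Reaches sspmStep (initConf n) c) : Inv c := by
  induction h with
  | refl => exact inv_init n
  | tail _ hstep ih => exact inv_step ih hstep

lemma fixed_concl {c : ℤ → ℕ} (hInv : Inv c) (hfix : IsFixed c) :
    ∃ p : ℤ,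
      (∀ j : ℤ, c j ≤ c p) ∧
      (∀ i : ℤ, p ≤ i → c (i + 1) ≤ c i ∧ c i ≤ c (i + 1) + 1) ∧
      (∀ i : ℤ, i ≤ p → c (i - 1) ≤ c i ∧ c i ≤ c (i - 1) + 1) ∧
      (∀ i j : ℤ, p < i → p < j → c i = c (i + 1) → 0 < c (i + 1) →
        c j = c (j + 1) → 0 < c (j + 1) → i = j) ∧
      (∀ i j : ℤ, i < p → j < p → c i = c (i - 1) → 0 < c (i - 1) →
        c j = c (j - 1) → 0 < c (j - 1) → i = j) := by
  obtain ⟨⟨lo, hi, hbd⟩, ⟨j0, hL, hR⟩, h1, h2, h3r, h3l, h4⟩ := hInv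
  have ceq : ∀ p q : ℤ, p = q → c p = c q := fun p q h => by rw [h]
  have noD : ∀ k : ℤ, c k ≤ c (k+1) + 1 := fun k => (hfix k).1
  have noU : ∀ k : ℤ, c (k+1) ≤ c k + 1 := by
    intro k
    have h' := (hfix (k+1)).2
    have e : c (k+1-1) = c k := ceq _ _ (by ring)
    omega
  have hmaxL : ∀ k : ℤ, k ≤ j0 → c k ≤ c j0 := fun k hk => chainLe hL k j0 hk le_rfl
  have hmaxR : ∀ k : ℤ, j0 ≤ k → c k ≤ c j0 := fun k hk => chainGe hR j0 k le_rfl hk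
  have hmax : ∀ k : ℤ, c k ≤ c j0 := by
    intro k; rcases le_total k j0 with h | h
    · exact hmaxL k h
    · exact hmaxR k h
  rcases Nat.eq_zero_or_pos (c j0) with hM0 | hMpos
  · refine ⟨j0, fun k => hmax k, ?_, ?_, ?_, ?_⟩
    · intro i _
      have q1 := hmax i; have q2 := hmax (i+1); omega
    · intro i _
      have q1 := hmax i; have q2 := hmax (i-1); omega
    · intro i j _ _ _ hpos _ _
      have := hmax (i+1); omega
    · intro i j _ _ _ hpos _ _
      have := hmax (i-1); omega
  have hj0hi : j0 ≤ hi := by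
    by_contra hcon
    have := hbd j0 (by omega); omega
  have hj0lo : lo ≤ j0 := by
    by_contra hcon
    have := hbd j0 (by omega); omega
  have hexr : ∃ r : ℤ, j0 ≤ r ∧ c r = c j0 ∧ c (r+1) < c j0 := by
    have key : ∀ d : ℕ, ∀ k : ℤ, j0 ≤ k → c k = c j0 → hi + 1 - k ≤ (d:ℤ) →
        ∃ r : ℤ, j0 ≤ r ∧ c r = c j0 ∧ c (r+1) < c j0 := by
      intro d
      induction d with
      | zero =>
        intro k hk hck hd
        exfalso
        have := hbd k (by omega)
        omega
      | succ d ih =>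
        intro k hk hck hd
        by_cases hnext : c (k+1) = c j0
        · exact ih (k+1) (by omega) hnext (by omega)
        · have := hmax (k+1)
          exact ⟨k, hk, hck, by omega⟩
    exact key (hi + 1 - j0).toNat j0 le_rfl rfl (by omega)
  obtain ⟨r, hj0r, hcr, hcr1⟩ := hexr
  have hexl : ∃ l : ℤ, l ≤ j0 ∧ c l = c j0 ∧ c (l-1) < c j0 := by
    have key : ∀ d : ℕ, ∀ k : ℤ, k ≤ j0 → c k = c j0 → k - (lo - 1) ≤ (d:ℤ) →
        ∃ l : ℤ, l ≤ j0 ∧ c l = c j0 ∧ c (l-1) < c j0 := by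
      intro d
      induction d with
      | zero =>
        intro k hk hck hd
        exfalso
        have := hbd k (by omega)
        omega
      | succ d ih =>
        intro k hk hck hd
        by_cases hprev : c (k-1) = c j0
        · exact ih (k-1) (by omega) hprev (by omega)
        · have := hmax (k-1)
          exact ⟨k, hk, hck, by omega⟩
    exact key (j0 - (lo - 1)).toNat j0 le_rfl rfl (by omega)
  obtain ⟨l, hlj0, hcl, hcl1⟩ := hexl
  have hplat : ∀ k : ℤ, l ≤ k → k ≤ r → c k = c j0 := by
    intro k hk1 hk2
    rcases le_total k j0 with h | h
    · have q1 := chainLe hL l k hk1 h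
      have q2 := hmax k
      omega
    · have q1 := chainGe hR k r h hk2
      have q2 := hmax k
      omega
  have hW : r ≤ l + 3 := by
    by_contra hcon
    have p0 := hplat l (by omega) (by omega)
    have p1 := hplat (l+1) (by omega) (by omega)
    have p2 := hplat (l+2) (by omega) (by omega)
    have p3 := hplat (l+3) (by omega) (by omega)
    have p4 := hplat (l+4) (by omega) (by omega)
    have e1 : c (l+1+1) = c (l+2) := ceq _ _ (by ring)
    have e2 : c (l+2+1) = c (l+3) := ceq _ _ (by ring)
    have e3 : c (l+3+1) = c (l+4) := ceq _ _ (by ring)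
    have H := h2 l (by omega) (by omega) (by omega) (by omega)
    omega
  have hrv : c (r+1) + 1 = c j0 := by
    have := noD r; omega
  have hlv : c (l-1) + 1 = c j0 := by
    have h' := noU (l-1)
    have e : c (l-1+1) = c l := ceq _ _ (by ring)
    omega
  have hstrictR : ∀ q : ℤ, r + 1 ≤ q → c q = c (q+1) → 0 < c q → c q < c (q-1) := by
    have H : ∀ q : ℤ, r + 1 ≤ q → (c q = c (q+1) → 0 < c q → c q < c (q-1)) := by
      refine Int.le_induction (motive := fun q _ => c q = c (q+1) → 0 < c q → c q < c (q-1)) ?_ ?_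
      · intro _ _
        have e : c (r+1-1) = c r := ceq _ _ (by ring)
        omega
      · intro q hq ih hpair hpos
        have e : c (q+1-1) = c q := ceq _ _ (by ring)
        have hle : c (q+1) ≤ c q := chainGe hR q (q+1) (by omega) (by omega)
        rcases lt_or_eq_of_le hle with h | h
        · omega
        · exfalso
          have e2 : c (q+1+1) = c (q+2) := ceq _ _ (by ring)
          have H1 := h1 q (by omega) (by omega) (by omega)
          have hres := ih (by omega) (by omega)
          omega
    exact H
  have hstrictL : ∀ q : ℤ, q ≤ l - 1 → c q = c (q-1) → 0 < c q → c q < c (q+1) := by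
    have H : ∀ q : ℤ, q ≤ l - 1 → (c q = c (q-1) → 0 < c q → c q < c (q+1)) := by
      refine Int.le_induction_down (motive := fun q _ => c q = c (q-1) → 0 < c q → c q < c (q+1)) ?_ ?_
      · intro _ _
        have e : c (l-1+1) = c l := ceq _ _ (by ring)
        omega
      · intro q hq ih hpair hpos
        have e : c (q-1+1) = c q := ceq _ _ (by ring)
        have hle : c (q-1) ≤ c q := by
          have h' := hL (q-1) (by omega)
          omega
        rcases lt_or_eq_of_le hle with h | h
        · omega
        · exfalso
          have e2 : c (q-1-1) = c (q-2) := ceq _ _ (by ring)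
          have e3 : c (q-2+1) = c (q-1) := ceq _ _ (by ring)
          have e4 : c (q-2+2) = c q := ceq _ _ (by ring)
          have e5 : c (q-2+3) = c (q+1) := ceq _ _ (by ring)
          have H1 := h1 (q-2) (by omega) (by omega) (by omega)
          have hres := ih (by omega) (by omega)
          omega
    exact H
  have keyR : ∀ i j : ℤ, r < i → i < j → c i = c (i+1) → 0 < c i →
      c j = c (j+1) → 0 < c j → False := by
    intro i j hri hij hpi h0i hpj h0j
    have hstr := hstrictR i (by omega) hpi h0i
    by_cases hadj : j = i + 1
    · subst hadj
      have e1 : c (i+1+1) = c (i+2) := ceq _ _ (by ring)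
      have H1 := h1 i (by omega) (by omega) (by omega)
      omega
    · obtain ⟨k, hk1, hk2, hk3⟩ := h3r i j (by omega) (by omega) hpi h0i hpj h0j
      have := noD k; omega
  have keyL : ∀ q1 q2 : ℤ, q1 < q2 → q2 ≤ l - 2 → c q1 = c (q1+1) → 0 < c q1 →
      c q2 = c (q2+1) → 0 < c q2 → False := by
    intro q1 q2 h12 h2l hp1 h01 hp2 h02
    have e0 : c (q2+1-1) = c q2 := ceq _ _ (by ring)
    have hstr := hstrictL (q2+1) (by omega) (by omega) (by omega)
    have e00 : c (q2+1+1) = c (q2+2) := ceq _ _ (by ring)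
    by_cases hadj : q2 = q1 + 1
    · subst hadj
      have e1 : c (q1+1+1) = c (q1+2) := ceq _ _ (by ring)
      have e2 : c (q1+3) = c (q1+1+1+1) := ceq _ _ (by ring)
      have H1 := h1 q1 (by omega) (by omega) (by omega)
      omega
    · obtain ⟨k, hk1, hk2, hk3⟩ := h3l q2 q1 (by omega) (by omega) (by omega) (by omega)
        (by omega) (by omega)
      have := noU k; omega
  have hnotr : ∀ q : ℤ, c q = c (q+1) → 0 < c q → q ≠ r := by
    intro q hp h0 hqr
    subst hqr
    omega
  have hnotl : ∀ i : ℤ, c i = c (i-1) → 0 < c i → i ≠ l := by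
    intro i hp h0 hil
    subst hil
    omega
  -- common goals
  have goal1 : ∀ p : ℤ, l ≤ p → p ≤ r → ∀ k : ℤ, c k ≤ c p := by
    intro p hp1 hp2 k
    rw [hplat p hp1 hp2]; exact hmax k
  have goal2 : ∀ p : ℤ, l ≤ p → p ≤ r → ∀ i : ℤ, p ≤ i → c (i+1) ≤ c i ∧ c i ≤ c (i+1) + 1 := by
    intro p hp1 hp2 i hpi
    refine ⟨?_, noD i⟩
    rcases le_or_gt j0 i with h | h
    · exact hR i h
    · have q1 := hplat i (by omega) (by omega)
      have q2 := hmax (i+1)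
      omega
  have goal3 : ∀ p : ℤ, l ≤ p → p ≤ r → ∀ i : ℤ, i ≤ p → c (i-1) ≤ c i ∧ c i ≤ c (i-1) + 1 := by
    intro p hp1 hp2 i hip
    constructor
    · rcases le_or_gt i j0 with h | h
      · have h' := hL (i-1) (by omega)
        have e : c (i-1+1) = c i := ceq _ _ (by ring)
        omega
      · have q1 := hplat i (by omega) (by omega)
        have q2 := hmax (i-1)
        omega
    · have h' := noU (i-1)
      have e : c (i-1+1) = c i := ceq _ _ (by ring)
      omega
  have hlr : l ≤ r := by omega
  by_cases hW3 : r ≤ l + 2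
  · -- W ≤ 3 : p := max (r-1) l
    have hp1 : l ≤ max (r-1) l := le_max_right _ _
    have hp2 : max (r-1) l ≤ r := max_le (by omega) (by omega)
    have hpr : r - 1 ≤ max (r-1) l := le_max_left _ _
    refine ⟨max (r-1) l, goal1 _ hp1 hp2, goal2 _ hp1 hp2, goal3 _ hp1 hp2, ?_, ?_⟩
    · intro i j hpi hpj hpairi hposi hpairj hposj
      have h0i : 0 < c i := by omega
      have h0j : 0 < c j := by omega
      have hir : i ≠ r := hnotr i hpairi h0i
      have hjr : j ≠ r := hnotr j hpairj h0j
      by_contra hne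
      rcases lt_trichotomy i j with h | h | h
      · exact keyR i j (by omega) h hpairi h0i hpairj h0j
      · exact hne h
      · exact keyR j i (by omega) h hpairj h0j hpairi h0i
    · intro i j hpi hpj hpairi hposi hpairj hposj
      have h0i : 0 < c i := by omega
      have h0j : 0 < c j := by omega
      have hil : i ≠ l := hnotl i hpairi h0i
      have hjl : j ≠ l := hnotl j hpairj h0j
      by_contra hne
      have ei : c (i-1+1) = c i := ceq _ _ (by ring)
      have ej : c (j-1+1) = c j := ceq _ _ (by ring)
      rcases lt_trichotomy i j with h | h | h
      · exact keyL (i-1) (j-1) (by omega) (by omega) (by omega) (by omega) (by omega) (by omega)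
      · exact hne h
      · exact keyL (j-1) (i-1) (by omega) (by omega) (by omega) (by omega) (by omega) (by omega)
  · -- W = 4
    have hr4 : r = l + 3 := by omega
    by_cases hRS : ∃ q : ℤ, r < q ∧ c q = c (q+1) ∧ 0 < c q
    · refine ⟨l+2, goal1 _ (by omega) (by omega), goal2 _ (by omega) (by omega),
        goal3 _ (by omega) (by omega), ?_, ?_⟩
      · intro i j hpi hpj hpairi hposi hpairj hposj
        have h0i : 0 < c i := by omega
        have h0j : 0 < c j := by omega
        have hir : i ≠ r := hnotr i hpairi h0i
        have hjr : j ≠ r := hnotr j hpairj h0j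
        by_contra hne
        rcases lt_trichotomy i j with h | h | h
        · exact keyR i j (by omega) h hpairi h0i hpairj h0j
        · exact hne h
        · exact keyR j i (by omega) h hpairj h0j hpairi h0i
      · intro i j hpi hpj hpairi hposi hpairj hposj
        have h0i : 0 < c i := by omega
        have h0j : 0 < c j := by omega
        have hil : i ≠ l := hnotl i hpairi h0i
        have hjl : j ≠ l := hnotl j hpairj h0j
        obtain ⟨q, hq1, hq2, hq3⟩ := hRS
        have hsideK4 : ∀ i' : ℤ, i' ≤ l - 1 → c i' = c (i'-1) → 0 < c i' → False := by
          intro i' hi' hpi' h0i'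
          have e1 : c (i'-1+1) = c i' := ceq _ _ (by ring)
          have p0 := hplat l (by omega) (by omega)
          have p1 := hplat (l+1) (by omega) (by omega)
          have p2 := hplat (l+2) (by omega) (by omega)
          have p3 := hplat (l+3) (by omega) (by omega)
          have e2 : c (l+1+1) = c (l+2) := ceq _ _ (by ring)
          have e3 : c (l+2+1) = c (l+3) := ceq _ _ (by ring)
          refine h4 l (i'-1) q (by omega) (by omega) (by omega) (by omega) (by omega)
            (by omega) (by omega) (by omega) (by omega) (by omega) ?_ ?_
          · intro k hk1 hk2
            exact ⟨hL k (by omega), noU k⟩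
          · intro k hk1 hk2
            exact ⟨hR k (by omega), noD k⟩
        have hi1 : i = l + 1 := by
          by_contra hii
          exact hsideK4 i (by omega) hpairi h0i
        have hj1 : j = l + 1 := by
          by_contra hjj
          exact hsideK4 j (by omega) hpairj h0j
        omega
    · refine ⟨l+1, goal1 _ (by omega) (by omega), goal2 _ (by omega) (by omega),
        goal3 _ (by omega) (by omega), ?_, ?_⟩
      · intro i j hpi hpj hpairi hposi hpairj hposj
        have h0i : 0 < c i := by omega
        have h0j : 0 < c j := by omega
        have hir : i ≠ r := hnotr i hpairi h0i
        have hjr : j ≠ r := hnotr j hpairj h0j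
        have hnoside : ∀ q : ℤ, r < q → c q = c (q+1) → 0 < c q → False := by
          intro q hq hp h0
          exact hRS ⟨q, hq, hp, h0⟩
        have hi2 : i = l + 2 := by
          by_contra hii
          exact hnoside i (by omega) hpairi h0i
        have hj2 : j = l + 2 := by
          by_contra hjj
          exact hnoside j (by omega) hpairj h0j
        omega
      · intro i j hpi hpj hpairi hposi hpairj hposj
        have h0i : 0 < c i := by omega
        have h0j : 0 < c j := by omega
        have hil : i ≠ l := hnotl i hpairi h0i
        have hjl : j ≠ l := hnotl j hpairj h0j
        by_contra hne
        have ei : c (i-1+1) = c i := ceq _ _ (by ring)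
        have ej : c (j-1+1) = c j := ceq _ _ (by ring)
        rcases lt_trichotomy i j with h | h | h
        · exact keyL (i-1) (j-1) (by omega) (by omega) (by omega) (by omega) (by omega) (by omega)
        · exact hne h
        · exact keyL (j-1) (i-1) (by omega) (by omega) (by omega) (by omega) (by omega) (by omega)

end SSPMDev

theorem sspm_fixed_point_double_staircase (n : ℕ) (c : ℤ → ℕ)
    (hreach : Reaches sspmStep (initConf n) c) (hfix : IsFixed c) :
    ∃ p : ℤ,
      (∀ j : ℤ, c j ≤ c p) ∧
      (∀ i : ℤ, p ≤ i → c (i + 1) ≤ c i ∧ c i ≤ c (i + 1) + 1) ∧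
      (∀ i : ℤ, i ≤ p → c (i - 1) ≤ c i ∧ c i ≤ c (i - 1) + 1) ∧
      (∀ i j : ℤ, p < i → p < j → c i = c (i + 1) → 0 < c (i + 1) →
        c j = c (j + 1) → 0 < c (j + 1) → i = j) ∧
      (∀ i j : ℤ, i < p → j < p → c i = c (i - 1) → 0 < c (i - 1) →
        c j = c (j - 1) → 0 < c (j - 1) → i = j) := by
  exact SSPMDev.fixed_concl (SSPMDev.inv_reach hreach) hfix
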